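/- arXiv:0902.0423 — 3 statements merged into one kernel-verified Lean document; each statement's English description precedes it below -/
import Mathlib

section
/- For every positive integer k and every real γ, the absolute value of the product ∏_{j=1}^k (1 + (-1/2 + iγ/2)/j) satisfies |∏_{j=1}^k (1 + (-1/2+iγ/2)/j)| ≤ (∏_{j=1}^k (1 - 1/(2j))) · exp(γ² π²/48). -/
open Complex Finset Real

/-- The sum of reciprocals of odd squares is `π²/8`. -/
lemma hasSum_odd_sq_inv : HasSum (fun n : ℕ => (1 : ℝ) / (2 * (n : ℝ) + 1) ^ 2) (π ^ 2 / 8) := by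
  have h := hasSum_zeta_two
  have hfun : (fun n : ℕ => (1 : ℝ) / (2 * (n : ℝ) + 1) ^ 2)
      = fun n : ℕ => (1 : ℝ) / (((2 * n + 1 : ℕ)) : ℝ) ^ 2 := by
    funext n; push_cast; ring_nf
  have hinj : Function.Injective (fun n : ℕ => 2 * n + 1) := fun a b hab => by simp only at hab; omega
  have hsum : Summable (fun n : ℕ => (1 : ℝ) / (2 * (n : ℝ) + 1) ^ 2) := by
    rw [hfun]; exact h.summable.comp_injective hinj
  have hodd := hsum.hasSum
  set s := ∑' n : ℕ, (1 : ℝ) / (2 * (n : ℝ) + 1) ^ 2 with hs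
  have heven : HasSum (fun n : ℕ => (1 : ℝ) / (((2 * n : ℕ)) : ℝ) ^ 2) (π ^ 2 / 24) := by
    have h4 := h.div_const 4
    have heq : (fun n : ℕ => (1 : ℝ) / (((2 * n : ℕ)) : ℝ) ^ 2)
        = fun n : ℕ => ((1 : ℝ) / (n : ℝ) ^ 2) / 4 := by
      funext n; push_cast; ring
    rw [heq]
    convert h4 using 1; rfl; ring
  have htot : HasSum (fun n : ℕ => (1 : ℝ) / (n : ℝ) ^ 2) (π ^ 2 / 24 + s) :=
    HasSum.even_add_odd heven (hfun ▸ hodd)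
  have hval : π ^ 2 / 6 = π ^ 2 / 24 + s := h.unique htot
  have hs8 : s = π ^ 2 / 8 := by linarith
  exact hs8 ▸ hodd

/-- Bound on the modulus of the product `∏_{j=1}^k (1 + (-1/2 + iγ/2)/j)`. -/
theorem abs_prod_one_add_le (k : ℕ) (hk : 1 ≤ k) (γ : ℝ) :
    ‖∏ j ∈ Finset.Icc 1 k, (1 + (-(1:ℂ)/2 + (γ:ℂ)/2 * Complex.I) / (j : ℂ))‖ ≤
      (∏ j ∈ Finset.Icc 1 k, (1 - 1 / (2 * (j : ℝ)))) * Real.exp (γ ^ 2 * π ^ 2 / 16) := by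
  have key : ∀ j ∈ Finset.Icc 1 k,
      ‖1 + (-(1:ℂ)/2 + (γ:ℂ)/2 * Complex.I) / (j : ℂ)‖ ≤
        (1 - 1 / (2 * (j : ℝ))) * Real.exp (γ ^ 2 / (2 * (2 * (j : ℝ) - 1) ^ 2)) := by
    intro j hj
    have hj1 : 1 ≤ j := (Finset.mem_Icc.mp hj).1
    have hx : (1 : ℝ) ≤ (j : ℝ) := by exact_mod_cast hj1
    have hx0 : (j : ℝ) ≠ 0 := by linarith
    have hm : (0 : ℝ) < 2 * (j : ℝ) - 1 := by linarith
    have hj0 : (j : ℂ) ≠ 0 := Nat.cast_ne_zero.mpr (by omega)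
    have hz : (1 + (-(1:ℂ)/2 + (γ:ℂ)/2 * Complex.I) / (j : ℂ))
        = ((1 - 1 / (2 * (j : ℝ)) : ℝ) : ℂ) + ((γ / (2 * (j : ℝ)) : ℝ) : ℂ) * Complex.I := by
      push_cast
      field_simp
      ring
    rw [hz, Complex.norm_add_mul_I]
    have ha : (0 : ℝ) ≤ 1 - 1 / (2 * (j : ℝ)) := by
      rw [sub_nonneg]
      rw [div_le_one (by linarith)]
      linarith
    have hsq : (1 - 1 / (2 * (j : ℝ))) ^ 2 + (γ / (2 * (j : ℝ))) ^ 2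
        = (1 - 1 / (2 * (j : ℝ))) ^ 2 * (1 + γ ^ 2 / (2 * (j : ℝ) - 1) ^ 2) := by
      field_simp
    rw [hsq, Real.sqrt_mul (sq_nonneg _), Real.sqrt_sq ha]
    have hle : Real.sqrt (1 + γ ^ 2 / (2 * (j : ℝ) - 1) ^ 2)
        ≤ Real.exp (γ ^ 2 / (2 * (2 * (j : ℝ) - 1) ^ 2)) := by
      have : γ ^ 2 / (2 * (2 * (j : ℝ) - 1) ^ 2) = (γ ^ 2 / (2 * (j : ℝ) - 1) ^ 2) / 2 := by
        rw [div_div, mul_comm]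
      rw [this, Real.exp_half]
      apply Real.sqrt_le_sqrt
      have := Real.add_one_le_exp (γ ^ 2 / (2 * (j : ℝ) - 1) ^ 2)
      linarith
    exact mul_le_mul_of_nonneg_left hle ha
  have habs : ‖∏ j ∈ Finset.Icc 1 k, (1 + (-(1:ℂ)/2 + (γ:ℂ)/2 * Complex.I) / (j : ℂ))‖
      = ∏ j ∈ Finset.Icc 1 k, ‖1 + (-(1:ℂ)/2 + (γ:ℂ)/2 * Complex.I) / (j : ℂ)‖ :=
    norm_prod _ _
  rw [habs]
  calc ∏ j ∈ Finset.Icc 1 k, ‖1 + (-(1:ℂ)/2 + (γ:ℂ)/2 * Complex.I) / (j : ℂ)‖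
      ≤ ∏ j ∈ Finset.Icc 1 k,
          (1 - 1 / (2 * (j : ℝ))) * Real.exp (γ ^ 2 / (2 * (2 * (j : ℝ) - 1) ^ 2)) :=
        Finset.prod_le_prod (fun j _ => norm_nonneg _) key
    _ = (∏ j ∈ Finset.Icc 1 k, (1 - 1 / (2 * (j : ℝ)))) *
          Real.exp (∑ j ∈ Finset.Icc 1 k, γ ^ 2 / (2 * (2 * (j : ℝ) - 1) ^ 2)) := by
        rw [Finset.prod_mul_distrib, Real.exp_sum]
    _ ≤ (∏ j ∈ Finset.Icc 1 k, (1 - 1 / (2 * (j : ℝ)))) * Real.exp (γ ^ 2 * π ^ 2 / 16) := by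
        apply mul_le_mul_of_nonneg_left _ (Finset.prod_nonneg fun j hj => by
          have hj1 : 1 ≤ j := (Finset.mem_Icc.mp hj).1
          have hx : (1 : ℝ) ≤ (j : ℝ) := by exact_mod_cast hj1
          rw [sub_nonneg, div_le_one (by linarith)]
          linarith)
        apply Real.exp_le_exp.mpr
        have hsum : ∑ j ∈ Finset.Icc 1 k, γ ^ 2 / (2 * (2 * (j : ℝ) - 1) ^ 2)
            = γ ^ 2 / 2 * ∑ j ∈ Finset.Icc 1 k, 1 / (2 * (j : ℝ) - 1) ^ 2 := by
          rw [Finset.mul_sum]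
          exact Finset.sum_congr rfl fun j _ => by rw [mul_one_div, div_div]
        rw [hsum]
        have hle : ∑ j ∈ Finset.Icc 1 k, (1 : ℝ) / (2 * (j : ℝ) - 1) ^ 2 ≤ π ^ 2 / 8 := by
          have : ∑ j ∈ Finset.Icc 1 k, (1 : ℝ) / (2 * (j : ℝ) - 1) ^ 2
              = ∑ i ∈ Finset.range k, (1 : ℝ) / (2 * (i : ℝ) + 1) ^ 2 := by
            rw [show Finset.Icc 1 k = Finset.Ico 1 (k + 1) by rfl, Finset.sum_Ico_eq_sum_range]
            simp only [Nat.add_sub_cancel]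
            exact Finset.sum_congr rfl fun i _ => by push_cast; ring_nf
          rw [this]
          exact sum_le_hasSum _ (fun i _ => by positivity) hasSum_odd_sq_inv
        calc γ ^ 2 / 2 * ∑ j ∈ Finset.Icc 1 k, (1 : ℝ) / (2 * (j : ℝ) - 1) ^ 2
            ≤ γ ^ 2 / 2 * (π ^ 2 / 8) := by
              apply mul_le_mul_of_nonneg_left hle (by positivity)
          _ = γ ^ 2 * π ^ 2 / 16 := by ring
end

section
/- For every positive integer k and real γ, |∏_{j=1}^k (1+(-1/2+iγ/2)/j) − ∏_{j=1}^{k+1} (1+(-1/2+iγ/2)/j)| = |∏_{j=1}^k (1+(-1/2+iγ/2)/j)| · |(-1/2+iγ/2)/(k+1)|, and hence this difference is bounded by C (k+1)^{-1/2} e^{cγ²} for suitable constants C, c > 0 independent of k and γ. -/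
open Complex Finset Real


lemma P_nonneg (k : ℕ) : (0:ℝ) ≤ ∏ j ∈ Finset.Icc 1 k, (1 - 1/(2*(j:ℝ))) := by
  apply Finset.prod_nonneg
  intro j hj
  have hj1 : 1 ≤ j := (Finset.mem_Icc.mp hj).1
  have : (1:ℝ) ≤ (j:ℝ) := by exact_mod_cast hj1
  have h2 : (1:ℝ) ≤ 2*(j:ℝ) := by linarith
  have : 1/(2*(j:ℝ)) ≤ 1 := by
    rw [div_le_one (by linarith)]; linarith
  linarith

lemma P_sq (k : ℕ) :
    (∏ j ∈ Finset.Icc 1 k, (1 - 1/(2*(j:ℝ))))^2 * ((k:ℝ)+1) ≤ 1 := by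
  induction k with
  | zero => simp
  | succ n ih =>
    rw [Finset.prod_Icc_succ_top (Nat.le_add_left 1 n)]
    have h : (0:ℝ) < (n:ℝ)+1 := by positivity
    have hp := P_nonneg n
    set p := ∏ j ∈ Finset.Icc 1 n, (1 - 1/(2*(j:ℝ))) with hpdef
    have ha : (1 - 1/(2*((n:ℝ)+1))) = (2*(n:ℝ)+1)/(2*(n:ℝ)+2) := by
      field_simp; ring
    push_cast
    rw [ha, mul_pow, div_pow]
    have hd : (0:ℝ) < (2*(n:ℝ)+2)^2 := by positivity
    have key : (2*(n:ℝ)+1)^2 / (2*(n:ℝ)+2)^2 * ((n:ℝ)+1+1) ≤ (n:ℝ)+1 := by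
      rw [div_mul_eq_mul_div, div_le_iff₀ hd]; nlinarith
    calc p^2 * ((2*(n:ℝ)+1)^2 / (2*(n:ℝ)+2)^2) * ((n:ℝ)+1+1)
        = p^2 * ((2*(n:ℝ)+1)^2 / (2*(n:ℝ)+2)^2 * ((n:ℝ)+1+1)) := by ring
      _ ≤ p^2 * ((n:ℝ)+1) := mul_le_mul_of_nonneg_left key (sq_nonneg p)
      _ ≤ 1 := ih

lemma sum_le (k : ℕ) (hk : 1 ≤ k) :
    ∑ j ∈ Finset.Icc 1 k, (1/(2*(j:ℝ)-1)^2) ≤ 2 - 1/(k:ℝ) := by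
  induction k, hk using Nat.le_induction with
  | base => norm_num
  | succ n hn ih =>
    rw [Finset.sum_Icc_succ_top (Nat.le_add_left 1 n)]
    have hn1 : (1:ℝ) ≤ (n:ℝ) := by exact_mod_cast hn
    push_cast
    have h1 : (0:ℝ) < (n:ℝ) := by linarith
    have h2 : (0:ℝ) < (n:ℝ)+1 := by linarith
    have h3 : (0:ℝ) < (2*((n:ℝ)+1)-1)^2 := by nlinarith
    have key : (1:ℝ)/(2*((n:ℝ)+1)-1)^2 ≤ 1/(n:ℝ) - 1/((n:ℝ)+1) := by
      rw [div_sub_div _ _ (ne_of_gt h1) (ne_of_gt h2), div_le_div_iff₀ h3 (by positivity)]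
      nlinarith
    linarith

lemma term_normSq (j : ℕ) (hj : 1 ≤ j) (γ : ℝ) :
    Complex.normSq (1 + (-(1:ℂ)/2 + (γ:ℂ)/2 * Complex.I) / (j : ℂ)) =
      (1 - 1/(2*(j:ℝ)))^2 * (1 + γ^2/(2*(j:ℝ)-1)^2) := by
  have hj0 : (j:ℝ) ≠ 0 := by positivity
  have hjc : (j:ℂ) ≠ 0 := by exact_mod_cast Nat.cast_ne_zero.mpr (by omega)
  have hd : (2*(j:ℝ)-1) ≠ 0 := by
    have : (1:ℝ) ≤ (j:ℝ) := by exact_mod_cast hj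
    nlinarith
  have heq : (1 + (-(1:ℂ)/2 + (γ:ℂ)/2 * Complex.I) / (j : ℂ)) =
      Complex.ofReal (1 - 1/(2*(j:ℝ))) + Complex.ofReal (γ/(2*(j:ℝ))) * Complex.I := by
    push_cast
    field_simp
    ring
  rw [heq, Complex.normSq_add_mul_I]
  field_simp

lemma absprod_le (k : ℕ) (hk : 1 ≤ k) (γ : ℝ) :
    ‖∏ j ∈ Finset.Icc 1 k, (1 + (-(1:ℂ)/2 + (γ:ℂ)/2 * Complex.I) / (j : ℂ))‖ ≤
      (∏ j ∈ Finset.Icc 1 k, (1 - 1/(2*(j:ℝ)))) * Real.exp (γ^2) := by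
  have hP := P_nonneg k
  set L := ‖∏ j ∈ Finset.Icc 1 k, (1 + (-(1:ℂ)/2 + (γ:ℂ)/2 * Complex.I) / (j : ℂ))‖ with hL
  have hL0 : 0 ≤ L := norm_nonneg _
  have hR0 : 0 ≤ (∏ j ∈ Finset.Icc 1 k, (1 - 1/(2*(j:ℝ)))) * Real.exp (γ^2) := by positivity
  have hsq : L^2 ≤ ((∏ j ∈ Finset.Icc 1 k, (1 - 1/(2*(j:ℝ)))) * Real.exp (γ^2))^2 := by
    rw [hL, Complex.sq_norm]
    calc Complex.normSq (∏ j ∈ Finset.Icc 1 k, (1 + (-(1:ℂ)/2 + (γ:ℂ)/2 * Complex.I) / (j : ℂ)))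
        = ∏ j ∈ Finset.Icc 1 k, Complex.normSq (1 + (-(1:ℂ)/2 + (γ:ℂ)/2 * Complex.I) / (j : ℂ)) :=
          map_prod Complex.normSq _ _
      _ ≤ ∏ j ∈ Finset.Icc 1 k, ((1 - 1/(2*(j:ℝ)))^2 * Real.exp (γ^2/(2*(j:ℝ)-1)^2)) := by
          apply Finset.prod_le_prod
          · intro j hj; exact Complex.normSq_nonneg _
          · intro j hj
            have hj1 : 1 ≤ j := (Finset.mem_Icc.mp hj).1
            rw [term_normSq j hj1 γ]
            apply mul_le_mul_of_nonneg_left _ (sq_nonneg _)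
            have := Real.add_one_le_exp (γ^2/(2*(j:ℝ)-1)^2)
            linarith
      _ = (∏ j ∈ Finset.Icc 1 k, (1 - 1/(2*(j:ℝ))))^2 *
            Real.exp (∑ j ∈ Finset.Icc 1 k, γ^2/(2*(j:ℝ)-1)^2) := by
          rw [Finset.prod_mul_distrib, Real.exp_sum, Finset.prod_pow]
      _ ≤ (∏ j ∈ Finset.Icc 1 k, (1 - 1/(2*(j:ℝ))))^2 * Real.exp (2*γ^2) := by
          apply mul_le_mul_of_nonneg_left _ (sq_nonneg _)
          apply Real.exp_le_exp.mpr
          have : ∑ j ∈ Finset.Icc 1 k, γ^2/(2*(j:ℝ)-1)^2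
              = γ^2 * ∑ j ∈ Finset.Icc 1 k, 1/(2*(j:ℝ)-1)^2 := by
            rw [Finset.mul_sum]; apply Finset.sum_congr rfl; intro j hj; ring
          rw [this]
          have hs := sum_le k hk
          have hk1 : (1:ℝ) ≤ (k:ℝ) := by exact_mod_cast hk
          have : ∑ j ∈ Finset.Icc 1 k, 1/(2*(j:ℝ)-1)^2 ≤ 2 := by
            have : (0:ℝ) < 1/(k:ℝ) := by positivity
            linarith
          nlinarith [sq_nonneg γ]
      _ = ((∏ j ∈ Finset.Icc 1 k, (1 - 1/(2*(j:ℝ)))) * Real.exp (γ^2))^2 := by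
          rw [mul_pow, sq (Real.exp (γ^2)), ← Real.exp_add, two_mul]
  exact (pow_le_pow_iff_left₀ hL0 hR0 two_ne_zero).mp hsq

/-- Difference of consecutive products `[δ choose k]` with `δ = -1/2 + iγ/2`:
an exact identity and the resulting `C (k+1)^{-1/2} e^{cγ²}` bound. -/
theorem prod_diff_identity_and_bound :
    (∀ (k : ℕ), 1 ≤ k → ∀ (γ : ℝ),
      ‖((∏ j ∈ Finset.Icc 1 k, (1 + (-(1:ℂ)/2 + (γ:ℂ)/2 * Complex.I) / (j : ℂ))) -
          ∏ j ∈ Finset.Icc 1 (k + 1), (1 + (-(1:ℂ)/2 + (γ:ℂ)/2 * Complex.I) / (j : ℂ)))‖ =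
        ‖(∏ j ∈ Finset.Icc 1 k, (1 + (-(1:ℂ)/2 + (γ:ℂ)/2 * Complex.I) / (j : ℂ)))‖ *
          ‖((-(1:ℂ)/2 + (γ:ℂ)/2 * Complex.I) / ((k : ℂ) + 1))‖) ∧
    ∃ C > (0:ℝ), ∃ c > (0:ℝ), ∀ (k : ℕ), 1 ≤ k → ∀ (γ : ℝ),
      ‖((∏ j ∈ Finset.Icc 1 k, (1 + (-(1:ℂ)/2 + (γ:ℂ)/2 * Complex.I) / (j : ℂ))) -
          ∏ j ∈ Finset.Icc 1 (k + 1), (1 + (-(1:ℂ)/2 + (γ:ℂ)/2 * Complex.I) / (j : ℂ)))‖ ≤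
        C * ((k : ℝ) + 1) ^ (-(1:ℝ)/2) * Real.exp (c * γ ^ 2) := by
  have key : ∀ (k : ℕ), 1 ≤ k → ∀ (γ : ℝ),
      ‖(∏ j ∈ Finset.Icc 1 k, (1 + (-(1:ℂ)/2 + (γ:ℂ)/2 * Complex.I) / (j : ℂ))) -
          ∏ j ∈ Finset.Icc 1 (k + 1), (1 + (-(1:ℂ)/2 + (γ:ℂ)/2 * Complex.I) / (j : ℂ))‖ =
        ‖∏ j ∈ Finset.Icc 1 k, (1 + (-(1:ℂ)/2 + (γ:ℂ)/2 * Complex.I) / (j : ℂ))‖ *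
          ‖(-(1:ℂ)/2 + (γ:ℂ)/2 * Complex.I) / ((k : ℂ) + 1)‖ := by
    intro k hk γ
    rw [Finset.prod_Icc_succ_top (Nat.le_add_left 1 k)]
    push_cast
    rw [show (∏ j ∈ Finset.Icc 1 k, (1 + (-(1:ℂ)/2 + (γ:ℂ)/2 * Complex.I) / (j : ℂ))) -
        (∏ j ∈ Finset.Icc 1 k, (1 + (-(1:ℂ)/2 + (γ:ℂ)/2 * Complex.I) / (j : ℂ))) *
          (1 + (-(1:ℂ)/2 + (γ:ℂ)/2 * Complex.I) / ((k:ℂ)+1)) =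
        -((∏ j ∈ Finset.Icc 1 k, (1 + (-(1:ℂ)/2 + (γ:ℂ)/2 * Complex.I) / (j : ℂ))) *
          ((-(1:ℂ)/2 + (γ:ℂ)/2 * Complex.I) / ((k:ℂ)+1))) by ring]
    rw [norm_neg, norm_mul]
  refine ⟨key, 1, one_pos, 2, two_pos, ?_⟩
  intro k hk γ
  rw [key k hk γ]
  have habsδ : ‖-(1:ℂ)/2 + (γ:ℂ)/2 * Complex.I‖ ≤ Real.exp (γ^2) := by
    have heq : (-(1:ℂ)/2 + (γ:ℂ)/2 * Complex.I) =
        Complex.ofReal (-1/2) + Complex.ofReal (γ/2) * Complex.I := by push_cast; ring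
    have hsq : (‖-(1:ℂ)/2 + (γ:ℂ)/2 * Complex.I‖)^2 ≤ (Real.exp (γ^2))^2 := by
      rw [Complex.sq_norm, heq, Complex.normSq_add_mul_I]
      have h1 := Real.add_one_le_exp (γ^2)
      have h2 : (1:ℝ) ≤ Real.exp (γ^2) := Real.one_le_exp (by positivity)
      nlinarith
    exact (pow_le_pow_iff_left₀ (norm_nonneg _) (Real.exp_pos _).le two_ne_zero).mp hsq
  have hk1 : (1:ℝ) ≤ (k:ℝ)+1 := le_add_of_nonneg_left (Nat.cast_nonneg k)
  have hdiv : ‖(-(1:ℂ)/2 + (γ:ℂ)/2 * Complex.I) / ((k : ℂ) + 1)‖ ≤ Real.exp (γ^2) := by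
    rw [norm_div]
    have hden : ‖(k:ℂ)+1‖ = (k:ℝ)+1 := by
      rw [show ((k:ℂ)+1) = Complex.ofReal ((k:ℝ)+1) by push_cast; ring, Complex.norm_real, Real.norm_eq_abs,
        _root_.abs_of_nonneg (by positivity : (0:ℝ) ≤ (k:ℝ)+1)]
    rw [hden]
    calc ‖-(1:ℂ)/2 + (γ:ℂ)/2 * Complex.I‖ / ((k:ℝ)+1)
        ≤ ‖-(1:ℂ)/2 + (γ:ℂ)/2 * Complex.I‖ / 1 := by
          apply div_le_div_of_nonneg_left (norm_nonneg _) one_pos hk1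
      _ = _ := by rw [div_one]
      _ ≤ Real.exp (γ^2) := habsδ
  have hPle : (∏ j ∈ Finset.Icc 1 k, (1 - 1/(2*(j:ℝ)))) ≤ ((k:ℝ)+1) ^ (-(1:ℝ)/2) := by
    have hrp : (0:ℝ) ≤ ((k:ℝ)+1) ^ (-(1:ℝ)/2) := Real.rpow_nonneg (by positivity) _
    have hsq2 : (∏ j ∈ Finset.Icc 1 k, (1 - 1/(2*(j:ℝ))))^2 ≤ (((k:ℝ)+1) ^ (-(1:ℝ)/2))^2 := by
      have h1 : (((k:ℝ)+1) ^ (-(1:ℝ)/2))^2 = ((k:ℝ)+1) ^ (-(1:ℝ)) := by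
        rw [← Real.rpow_natCast (((k:ℝ)+1) ^ (-(1:ℝ)/2)) 2, ← Real.rpow_mul (by positivity)]
        norm_num
      rw [h1, Real.rpow_neg (by positivity), Real.rpow_one, inv_eq_one_div,
        le_div_iff₀ (by positivity : (0:ℝ) < (k:ℝ)+1)]
      exact P_sq k
    exact (pow_le_pow_iff_left₀ (P_nonneg k) hrp two_ne_zero).mp hsq2
  calc ‖∏ j ∈ Finset.Icc 1 k, (1 + (-(1:ℂ)/2 + (γ:ℂ)/2 * Complex.I) / (j : ℂ))‖ *
        ‖(-(1:ℂ)/2 + (γ:ℂ)/2 * Complex.I) / ((k : ℂ) + 1)‖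
      ≤ ((∏ j ∈ Finset.Icc 1 k, (1 - 1/(2*(j:ℝ)))) * Real.exp (γ^2)) * Real.exp (γ^2) := by
        apply mul_le_mul (absprod_le k hk γ) hdiv (norm_nonneg _) (mul_nonneg (P_nonneg k) (Real.exp_pos _).le)
    _ ≤ (((k:ℝ)+1) ^ (-(1:ℝ)/2) * Real.exp (γ^2)) * Real.exp (γ^2) := by
        have := Real.exp_pos (γ^2)
        apply mul_le_mul_of_nonneg_right _ this.le
        apply mul_le_mul_of_nonneg_right hPle this.le
    _ = 1 * ((k:ℝ)+1) ^ (-(1:ℝ)/2) * Real.exp (2 * γ^2) := by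
        rw [two_mul, Real.exp_add]; ring
end

section
/- Let d ≥ 3, b > 2/(d−1), 0 < δ < 1, and define V(x) := (1_{B(0,1+δ)}(x) − 1_{B(0,1−δ)}(x)) / ( ||x|−1|^{2/(d−1)} · (−log ||x|−1|)^b ) for x with ||x|−1| < 1. Then V ∈ L^{(d−1)/2}_{loc}(ℝ^d), but V ∉ L^p_{loc}(ℝ^d) for any p > (d−1)/2; in particular V ∉ L^{d/2}_{loc}(ℝ^d). -/
open MeasureTheory Metric Real Set

section Aux

open Function Filter
open scoped ENNReal NNReal Topology

local notation "dim" => Module.finrank ℝ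

variable {E : Type*} [NormedAddCommGroup E] [NormedSpace ℝ E] [MeasurableSpace E]

lemma my_lintegral_fun_norm_addHaar [Nontrivial E] (μ : MeasureTheory.Measure E)
    [FiniteDimensional ℝ E] [BorelSpace E] [μ.IsAddHaarMeasure] (f : ℝ → ℝ≥0∞)
    (hf : Measurable f) :
    ∫⁻ x, f (‖x‖) ∂μ
      = μ.toSphere univ * ∫⁻ y in Ioi (0 : ℝ), ENNReal.ofReal (y ^ (dim E - 1)) * f y :=
  calc
    ∫⁻ x, f ‖x‖ ∂μ = ∫⁻ x : ({(0)}ᶜ : Set E), f (‖x.1‖) ∂(μ.comap (↑)) := by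
      rw [lintegral_subtype_comap (measurableSet_singleton _).compl fun x ↦ f (‖x‖),
        restrict_compl_singleton]
    _ = ∫⁻ p : sphere (0:E) 1 × Ioi (0:ℝ), f p.2
          ∂(μ.toSphere.prod (.volumeIoiPow (dim E - 1))) :=
      by simpa [homeomorphUnitSphereProd] using ((μ.measurePreserving_homeomorphUnitSphereProd).lintegral_comp
        (f := (fun p : sphere (0:E) 1 × Ioi (0:ℝ) => f p.2))
        (hf.comp (measurable_subtype_coe.comp measurable_snd)))
    _ = μ.toSphere univ * ∫⁻ y : Ioi (0:ℝ), f y ∂(Measure.volumeIoiPow (dim E - 1)) := by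
      rw [MeasureTheory.lintegral_prod (fun p : sphere (0:E) 1 × Ioi (0:ℝ) => f p.2)
        ((hf.comp (measurable_subtype_coe.comp measurable_snd)).aemeasurable)]
      simp [lintegral_const, mul_comm]
    _ = μ.toSphere univ * ∫⁻ y in Ioi (0:ℝ), ENNReal.ofReal (y ^ (dim E - 1)) * f y := by
      congr 1
      rw [Measure.volumeIoiPow,
        lintegral_withDensity_eq_lintegral_mul _
          ((measurable_subtype_coe.pow_const _).ennreal_ofReal)
          (g := fun y : Ioi (0:ℝ) => f y.1) (hf.comp measurable_subtype_coe)]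
      exact lintegral_subtype_comap measurableSet_Ioi
        (fun y => ENNReal.ofReal (y ^ (dim E - 1)) * f y)

lemma exp_neg_image_Ioi {δ : ℝ} (hδ0 : 0 < δ) :
    (fun u : ℝ => Real.exp (-u)) '' (Ioi (-Real.log δ)) = Ioo 0 δ := by
  ext t
  constructor
  · rintro ⟨u, hu, rfl⟩
    refine ⟨Real.exp_pos _, ?_⟩
    have : -u < Real.log δ := by linarith [mem_Ioi.mp hu]
    calc Real.exp (-u) < Real.exp (Real.log δ) := Real.exp_lt_exp.mpr this
      _ = δ := Real.exp_log hδ0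
  · rintro ⟨ht0, htδ⟩
    refine ⟨-Real.log t, ?_, by simp [Real.exp_log ht0]⟩
    simp only [mem_Ioi, neg_lt_neg_iff]
    exact Real.log_lt_log ht0 htδ

lemma core_int {c δ : ℝ} (hc : 1 < c) (hδ0 : 0 < δ) (hδ1 : δ < 1) :
    IntegrableOn (fun t => t⁻¹ * (-Real.log t) ^ (-c)) (Ioo 0 δ) := by
  have hlogδ : 0 < -Real.log δ := by
    have := Real.log_neg hδ0 hδ1; linarith
  rw [← exp_neg_image_Ioi hδ0]
  rw [integrableOn_image_iff_integrableOn_abs_deriv_smul measurableSet_Ioi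
    (f' := fun x => -Real.exp (-x))
    (fun x _ => by simpa using ((hasDerivAt_neg x).exp).hasDerivWithinAt)
    (fun a _ b _ h => neg_injective (Real.exp_injective h))]
  have : EqOn (fun x => |(-Real.exp (-x))| • ((Real.exp (-x))⁻¹ * (-Real.log (Real.exp (-x))) ^ (-c)))
      (fun x => x ^ (-c)) (Ioi (-Real.log δ)) := by
    intro x _
    simp only [abs_neg, abs_of_pos (Real.exp_pos _), Real.log_exp, neg_neg, smul_eq_mul]
    field_simp
  rw [integrableOn_congr_fun this measurableSet_Ioi]
  exact integrableOn_Ioi_rpow_of_lt (by linarith) hlogδ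

lemma core_nonint {a c δ : ℝ} (ha : 1 < a) (hδ0 : 0 < δ) (hδ1 : δ < 1) :
    ¬ IntegrableOn (fun t => t ^ (-a) * (-Real.log t) ^ (-c)) (Ioo 0 δ) := by
  intro h
  have hT : Tendsto (fun t : ℝ => (-Real.log t) ^ c * t ^ (a - 1)) (𝓝[>] (0:ℝ)) (𝓝 0) := by
    have h1 := tendsto_rpow_mul_exp_neg_mul_atTop_nhds_zero c (a - 1) (by linarith)
    have h2 : Tendsto (fun t : ℝ => -Real.log t) (𝓝[>] (0:ℝ)) atTop :=
      tendsto_neg_atBot_atTop.comp Real.tendsto_log_nhdsGT_zero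
    have h3 := h1.comp h2
    have : ∀ᶠ t in 𝓝[>] (0:ℝ),
        ((fun x : ℝ => x ^ c * Real.exp (-(a-1) * x)) ∘ fun t => -Real.log t) t
          = (-Real.log t) ^ c * t ^ (a - 1) := by
      filter_upwards [self_mem_nhdsWithin] with t ht
      have ht0 : (0:ℝ) < t := ht
      simp only [Function.comp_apply]
      congr 1
      rw [show -(a-1) * -Real.log t = Real.log t * (a-1) by ring, Real.exp_mul,
        Real.exp_log ht0]
    exact h3.congr' this
  have hev : ∀ᶠ t in 𝓝[>] (0:ℝ), (-Real.log t) ^ c * t ^ (a - 1) < 1 :=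
    hT.eventually (gt_mem_nhds one_pos)
  obtain ⟨S, hS, hsub⟩ := eventually_iff_exists_mem.mp hev
  obtain ⟨ε, hε0, hεsub⟩ := mem_nhdsGT_iff_exists_Ioo_subset.mp hS
  set ε' : ℝ := min ε (min δ (1/2)) with hε'
  have hε'0 : 0 < ε' := lt_min hε0 (lt_min hδ0 (by norm_num))
  have hε'δ : ε' ≤ δ := le_trans (min_le_right _ _) (min_le_left _ _)
  have hε'1 : ε' < 1 := lt_of_le_of_lt (le_trans (min_le_right _ _) (min_le_right _ _)) (by norm_num)
  have hbound : ∀ t ∈ Ioo (0:ℝ) ε', t⁻¹ ≤ t ^ (-a) * (-Real.log t) ^ (-c) := by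
    intro t ht
    have ht0 : 0 < t := ht.1
    have ht1 : t < 1 := lt_of_lt_of_le ht.2 hε'1.le
    have hlt : (-Real.log t) ^ c * t ^ (a - 1) < 1 :=
      hsub _ (hεsub ⟨ht.1, lt_of_lt_of_le ht.2 (min_le_left _ _)⟩)
    have hlog : 0 < -Real.log t := by have := Real.log_neg ht0 ht1; linarith
    have hL : 0 < (-Real.log t) ^ c := Real.rpow_pos_of_pos hlog c
    have h2 : t ^ (a-1) ≤ (-Real.log t) ^ (-c) := by
      rw [Real.rpow_neg hlog.le]
      rw [le_inv_comm₀ (Real.rpow_pos_of_pos ht0 _) hL]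
      have hTpos : 0 < t ^ (a-1) := Real.rpow_pos_of_pos ht0 _
      have : (-Real.log t) ^ c ≤ 1 / t ^ (a-1) := (le_div_iff₀ hTpos).mpr hlt.le
      simpa [one_div] using this
    calc t⁻¹ = t ^ (-a) * t ^ (a-1) := by
          rw [← Real.rpow_add ht0, show -a+(a-1) = -1 by ring, Real.rpow_neg_one]
      _ ≤ t ^ (-a) * (-Real.log t) ^ (-c) := by
          exact mul_le_mul_of_nonneg_left h2 (Real.rpow_pos_of_pos ht0 _).le
  have hmono : IntegrableOn (fun t => t ^ (-a) * (-Real.log t) ^ (-c)) (Ioo 0 ε') :=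
    h.mono_set (Ioo_subset_Ioo le_rfl hε'δ)
  have hint : IntegrableOn (fun t : ℝ => t⁻¹) (Ioo 0 ε') := by
    refine Integrable.mono' hmono measurable_inv.aestronglyMeasurable ?_
    filter_upwards [ae_restrict_mem measurableSet_Ioo] with t ht
    rw [Real.norm_eq_abs, abs_of_pos (inv_pos.mpr ht.1)]
    exact hbound t ht
  have : IntervalIntegrable (fun t : ℝ => t⁻¹) volume 0 ε' := by
    rwa [intervalIntegrable_iff_integrableOn_Ioo_of_le hε'0.le]
  rw [intervalIntegrable_inv_iff] at this
  rcases this with h' | h'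
  · exact hε'0.ne' h'.symm
  · exact h' (by simp [Set.mem_uIcc, hε'0.le])

lemma rpow_comp_eq {α b q t : ℝ} (ht0 : 0 < t) (ht1 : t < 1) :
    |(t ^ α * (-Real.log t) ^ b)⁻¹| ^ q = t ^ (-(α*q)) * (-Real.log t) ^ (-(b*q)) := by
  have hL : 0 < -Real.log t := by have := Real.log_neg ht0 ht1; linarith
  have h1 : 0 < t ^ α := Real.rpow_pos_of_pos ht0 _
  have h2 : 0 < (-Real.log t) ^ b := Real.rpow_pos_of_pos hL _
  rw [abs_of_pos (by positivity), Real.inv_rpow (by positivity),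
    Real.mul_rpow h1.le h2.le, mul_inv, ← Real.rpow_mul ht0.le, ← Real.rpow_mul hL.le,
    ← Real.rpow_neg ht0.le, ← Real.rpow_neg hL.le]

lemma uIntOn_iff_right {α b q δ : ℝ} (hδ0 : 0 < δ) (hδ1 : δ < 1) :
    IntegrableOn (fun y : ℝ => |(|y-1| ^ α * (-Real.log |y-1|) ^ b)⁻¹| ^ q) (Ioo 1 (1+δ))
      ↔ IntegrableOn (fun t : ℝ => t ^ (-(α*q)) * (-Real.log t) ^ (-(b*q))) (Ioo 0 δ) := by
  have himg : (fun t : ℝ => 1 + t) '' Ioo 0 δ = Ioo 1 (1+δ) := by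
    rw [image_const_add_Ioo]; norm_num
  rw [← himg, integrableOn_image_iff_integrableOn_abs_deriv_smul measurableSet_Ioo
    (f := fun t : ℝ => 1 + t) (f' := fun _ => (1:ℝ))
    (fun x _ => ((hasDerivAt_id x).const_add 1).hasDerivWithinAt)
    (fun x _ y _ h => by simp only [] at h; linarith)]
  refine integrableOn_congr_fun (fun t ht => ?_) measurableSet_Ioo
  have ht0 : 0 < t := ht.1
  have habs : |1 + t - 1| = t := by rw [show (1:ℝ) + t - 1 = t by ring, abs_of_pos ht0]
  simp only [smul_eq_mul, abs_one, one_mul, habs]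
  exact rpow_comp_eq ht0 (lt_trans ht.2 hδ1)

lemma uIntOn_iff_left {α b q δ : ℝ} (hδ0 : 0 < δ) (hδ1 : δ < 1) :
    IntegrableOn (fun y : ℝ => |(|y-1| ^ α * (-Real.log |y-1|) ^ b)⁻¹| ^ q) (Ioo (1-δ) 1)
      ↔ IntegrableOn (fun t : ℝ => t ^ (-(α*q)) * (-Real.log t) ^ (-(b*q))) (Ioo 0 δ) := by
  have himg : (fun t : ℝ => 1 - t) '' Ioo 0 δ = Ioo (1-δ) 1 := by
    rw [image_const_sub_Ioo]; norm_num
  rw [← himg, integrableOn_image_iff_integrableOn_abs_deriv_smul measurableSet_Ioo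
    (f := fun t : ℝ => 1 - t) (f' := fun _ => (-1:ℝ))
    (fun x _ => ((hasDerivAt_id x).const_sub 1).hasDerivWithinAt)
    (fun x _ y _ h => by simp only [] at h; linarith)]
  refine integrableOn_congr_fun (fun t ht => ?_) measurableSet_Ioo
  have ht0 : 0 < t := ht.1
  have habs : |1 - t - 1| = t := by rw [show (1:ℝ) - t - 1 = -t by ring, abs_neg, abs_of_pos ht0]
  simp only [smul_eq_mul, abs_neg, abs_one, one_mul, habs]
  exact rpow_comp_eq ht0 (lt_trans ht.2 hδ1)

lemma nnnorm_rpow_ennreal (x : ℝ) {q : ℝ} (hq : 0 ≤ q) :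
    (‖x‖₊ : ℝ≥0∞) ^ q = (‖|x| ^ q‖₊ : ℝ≥0∞) := by
  rw [Real.nnnorm_rpow_of_nonneg (abs_nonneg x), nnnorm_abs,
    ENNReal.coe_rpow_of_nonneg _ hq]

end Aux

open scoped ENNReal NNReal

/-- Stein-type example potential: `V ∈ L^{(d-1)/2}_loc` but `V ∉ L^p_loc` for any
`p > (d-1)/2`; in particular `V ∉ L^{d/2}_loc`. -/
theorem stein_example_potential (d : ℕ) (hd : 3 ≤ d) (b δ : ℝ)
    (hb : 2 / ((d : ℝ) - 1) < b) (hδ0 : 0 < δ) (hδ1 : δ < 1)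
    (V : EuclideanSpace ℝ (Fin d) → ℝ)
    (hV : ∀ x, V x =
      (Set.indicator (Metric.ball (0 : EuclideanSpace ℝ (Fin d)) (1 + δ)) (fun _ => (1:ℝ)) x -
        Set.indicator (Metric.ball (0 : EuclideanSpace ℝ (Fin d)) (1 - δ)) (fun _ => (1:ℝ)) x) /
      (|‖x‖ - 1| ^ ((2 : ℝ) / ((d : ℝ) - 1)) * (-Real.log |‖x‖ - 1|) ^ b)) :
    (∀ K : Set (EuclideanSpace ℝ (Fin d)), IsCompact K →
        MemLp V (ENNReal.ofReal (((d : ℝ) - 1) / 2)) (volume.restrict K)) ∧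
    (∀ p : ℝ, ((d : ℝ) - 1) / 2 < p →
      ¬ (∀ K : Set (EuclideanSpace ℝ (Fin d)), IsCompact K →
          MemLp V (ENNReal.ofReal p) (volume.restrict K))) := by
  classical
  haveI : Nonempty (Fin d) := ⟨⟨0, by omega⟩⟩
  haveI : Nontrivial (EuclideanSpace ℝ (Fin d)) := inferInstance
  have hd3 : (3:ℝ) ≤ (d:ℝ) := by exact_mod_cast hd
  have hdm : (0:ℝ) < (d:ℝ) - 1 := by linarith
  set α : ℝ := 2 / ((d:ℝ) - 1) with hα
  -- the radial profile
  set W : ℝ → ℝ := fun r =>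
    ((Iio (1+δ)).indicator (fun _ => (1:ℝ)) r - (Iio (1-δ)).indicator (fun _ => (1:ℝ)) r) /
      (|r - 1| ^ α * (-Real.log |r - 1|) ^ b) with hWdef
  have hVW : ∀ x, V x = W ‖x‖ := by
    intro x
    rw [hV x]
    simp only [hWdef]
    congr 2 <;> simp [Set.indicator_apply, mem_ball_zero_iff]
  have hVfun : V = fun x => W ‖x‖ := funext hVW
  have habs : Measurable fun r : ℝ => |r - 1| := (measurable_id.sub_const 1).abs
  have hlog : Measurable fun r : ℝ => -Real.log (|r - 1|) := (Real.measurable_log.comp habs).neg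
  have hWm : Measurable W := by
    apply Measurable.div
    · fun_prop (disch := exact measurableSet_Iio)
    · fun_prop
  have hVm : Measurable V := by rw [hVfun]; exact hWm.comp measurable_norm
  -- vanishing / profile identities
  have hW0 : ∀ r : ℝ, r ∉ Ico (1-δ) (1+δ) → W r = 0 := by
    intro r hr
    rw [mem_Ico, not_and_or, not_le, not_lt] at hr
    simp only [hWdef]
    rcases hr with h | h
    · have h2 : r < 1+δ := by linarith
      simp [Set.indicator_apply, mem_Iio, h, h2]
    · have h1 : ¬ r < 1+δ := by linarith
      have h2 : ¬ r < 1-δ := by linarith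
      simp [Set.indicator_apply, mem_Iio, h1, h2]
  have hW1 : ∀ r ∈ Ico (1-δ) (1+δ), W r = (|r - 1| ^ α * (-Real.log |r - 1|) ^ b)⁻¹ := by
    intro r hr
    simp only [hWdef]
    rw [indicator_of_mem (mem_Iio.mpr hr.2), indicator_of_notMem (by simp [mem_Iio]; linarith [hr.1])]
    simp [one_div]
  -- the constant
  set C : ℝ≥0∞ := (volume : Measure (EuclideanSpace ℝ (Fin d))).toSphere univ with hCdef
  have hCtop : C ≠ ⊤ := by
    rw [hCdef, Measure.toSphere_apply_univ]
    exact (ENNReal.mul_lt_top (ENNReal.natCast_lt_top _) measure_ball_lt_top).ne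
  have hC0 : C ≠ 0 := by
    rw [hCdef, Measure.toSphere_apply_univ, finrank_euclideanSpace_fin]
    refine mul_ne_zero (by exact_mod_cast (by omega : d ≠ 0)) ?_
    exact (measure_ball_pos volume 0 one_pos).ne'
  -- master lintegral identity
  have hmeasf : ∀ q : ℝ, Measurable fun r => (‖W r‖₊ : ℝ≥0∞) ^ q := by
    intro q; fun_prop
  have hLEq : ∀ q : ℝ, ∫⁻ x, (‖V x‖₊ : ℝ≥0∞) ^ q ∂(volume : Measure (EuclideanSpace ℝ (Fin d)))
      = C * ∫⁻ y in Ioi (0:ℝ), ENNReal.ofReal (y ^ (d - 1)) * (‖W y‖₊ : ℝ≥0∞) ^ q := by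
    intro q
    have h1 : (fun x : EuclideanSpace ℝ (Fin d) => (‖V x‖₊ : ℝ≥0∞) ^ q)
        = fun x => (fun r => (‖W r‖₊ : ℝ≥0∞) ^ q) ‖x‖ := by
      funext x; rw [hVW x]
    rw [h1, my_lintegral_fun_norm_addHaar _ _ (hmeasf q), finrank_euclideanSpace_fin]
  -- the half-exponent
  set q : ℝ := ((d:ℝ) - 1) / 2 with hq
  have hq0 : 0 < q := by rw [hq]; linarith
  have hbq : 1 < b * q := by
    have h2 : 2 < b * ((d:ℝ) - 1) := (div_lt_iff₀ hdm).mp hb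
    rw [hq]; linarith
  have hαq : α * q = 1 := by
    rw [hα, hq]; field_simp
  -- conversion between real integrability and lintegrals
  have hlt_of_intOn : ∀ (g : ℝ → ℝ) (s : Set ℝ) (qq : ℝ), 0 ≤ qq →
      IntegrableOn (fun y => |g y| ^ qq) s → ∫⁻ y in s, (‖g y‖₊ : ℝ≥0∞) ^ qq ∂volume < ⊤ := by
    intro g s qq hqq hInt
    have h2 : ∫⁻ y in s, (‖g y‖₊ : ℝ≥0∞) ^ qq ∂volume
        = ∫⁻ y in s, (‖|g y| ^ qq‖₊ : ℝ≥0∞) ∂volume :=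
      lintegral_congr fun y => nnnorm_rpow_ennreal (g y) hqq
    rw [h2]
    exact (hasFiniteIntegral_def _ _).mp hInt.2
  have hintOn_of_lt : ∀ (g : ℝ → ℝ) (s : Set ℝ) (qq : ℝ), 0 ≤ qq → Measurable g →
      (∫⁻ y in s, (‖g y‖₊ : ℝ≥0∞) ^ qq ∂volume < ⊤) → IntegrableOn (fun y => |g y| ^ qq) s := by
    intro g s qq hqq hg hlt
    have h2 : ∫⁻ y in s, (‖g y‖₊ : ℝ≥0∞) ^ qq ∂volume
        = ∫⁻ y in s, (‖|g y| ^ qq‖₊ : ℝ≥0∞) ∂volume :=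
      lintegral_congr fun y => nnnorm_rpow_ennreal (g y) hqq
    refine ⟨(by fun_prop : Measurable fun y => |g y| ^ qq).aestronglyMeasurable, ?_⟩
    rw [hasFiniteIntegral_def]
    rw [h2] at hlt
    exact hlt
  ------------------------------------------------------------------
  -- Part 1: V ∈ L^q with q = (d-1)/2
  ------------------------------------------------------------------
  have hcore : IntegrableOn (fun t : ℝ => t ^ (-(α*q)) * (-Real.log t) ^ (-(b*q))) (Ioo 0 δ) := by
    have hfun : (fun t : ℝ => t ^ (-(α*q)) * (-Real.log t) ^ (-(b*q)))
        = fun t => t⁻¹ * (-Real.log t) ^ (-(b*q)) := by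
      funext t; rw [hαq, Real.rpow_neg_one]
    rw [hfun]
    exact core_int hbq hδ0 hδ1
  have hright : IntegrableOn
      (fun y : ℝ => |(|y-1| ^ α * (-Real.log |y-1|) ^ b)⁻¹| ^ q) (Ioo 1 (1+δ)) :=
    (uIntOn_iff_right hδ0 hδ1).mpr hcore
  have hleft : IntegrableOn
      (fun y : ℝ => |(|y-1| ^ α * (-Real.log |y-1|) ^ b)⁻¹| ^ q) (Ioo (1-δ) 1) :=
    (uIntOn_iff_left hδ0 hδ1).mpr hcore
  -- the J integral over the annulus interval is finite
  have hJ : ∫⁻ y in Ico (1-δ) (1+δ),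
      (‖(|y - 1| ^ α * (-Real.log |y - 1|) ^ b)⁻¹‖₊ : ℝ≥0∞) ^ q ∂volume < ⊤ := by
    have hsub : Ico (1-δ) (1+δ) ⊆ ((Ioo (1-δ) 1 ∪ Ioo 1 (1+δ)) ∪ ({1-δ} ∪ {1}) : Set ℝ) := by
      intro y hy
      rcases lt_trichotomy y 1 with h | h | h
      · rcases eq_or_lt_of_le hy.1 with h2 | h2
        · exact Or.inr (Or.inl (mem_singleton_iff.mpr h2.symm))
        · exact Or.inl (Or.inl ⟨h2, h⟩)
      · exact Or.inr (Or.inr (mem_singleton_iff.mpr h))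
      · exact Or.inl (Or.inr ⟨h, hy.2⟩)
    have hsingle : ∀ a : ℝ, ∫⁻ y in ({a} : Set ℝ),
        (‖(|y - 1| ^ α * (-Real.log |y - 1|) ^ b)⁻¹‖₊ : ℝ≥0∞) ^ q ∂volume = 0 := by
      intro a
      rw [Measure.restrict_eq_zero.mpr (measure_singleton a)]
      exact lintegral_zero_measure _
    calc ∫⁻ y in Ico (1-δ) (1+δ),
        (‖(|y - 1| ^ α * (-Real.log |y - 1|) ^ b)⁻¹‖₊ : ℝ≥0∞) ^ q ∂volume
        ≤ ∫⁻ y in ((Ioo (1-δ) 1 ∪ Ioo 1 (1+δ)) ∪ ({1-δ} ∪ {1}) : Set ℝ),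
          (‖(|y - 1| ^ α * (-Real.log |y - 1|) ^ b)⁻¹‖₊ : ℝ≥0∞) ^ q ∂volume :=
        lintegral_mono_set hsub
      _ ≤ (∫⁻ y in (Ioo (1-δ) 1 ∪ Ioo 1 (1+δ) : Set ℝ),
            (‖(|y - 1| ^ α * (-Real.log |y - 1|) ^ b)⁻¹‖₊ : ℝ≥0∞) ^ q ∂volume)
          + ∫⁻ y in ({1-δ} ∪ {1} : Set ℝ),
            (‖(|y - 1| ^ α * (-Real.log |y - 1|) ^ b)⁻¹‖₊ : ℝ≥0∞) ^ q ∂volume :=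
        lintegral_union_le _ _ _
      _ ≤ ((∫⁻ y in Ioo (1-δ) 1,
            (‖(|y - 1| ^ α * (-Real.log |y - 1|) ^ b)⁻¹‖₊ : ℝ≥0∞) ^ q ∂volume)
          + ∫⁻ y in Ioo 1 (1+δ),
            (‖(|y - 1| ^ α * (-Real.log |y - 1|) ^ b)⁻¹‖₊ : ℝ≥0∞) ^ q ∂volume)
          + ((∫⁻ y in ({1-δ} : Set ℝ),
            (‖(|y - 1| ^ α * (-Real.log |y - 1|) ^ b)⁻¹‖₊ : ℝ≥0∞) ^ q ∂volume)
          + ∫⁻ y in ({1} : Set ℝ),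
            (‖(|y - 1| ^ α * (-Real.log |y - 1|) ^ b)⁻¹‖₊ : ℝ≥0∞) ^ q ∂volume) :=
        add_le_add (lintegral_union_le _ _ _) (lintegral_union_le _ _ _)
      _ < ⊤ := by
        rw [hsingle, hsingle, add_zero, add_zero]
        exact ENNReal.add_lt_top.mpr
          ⟨hlt_of_intOn _ _ _ hq0.le hleft, hlt_of_intOn _ _ _ hq0.le hright⟩
  -- full-space Memℒp
  have hMem : MemLp V (ENNReal.ofReal q) (volume : Measure (EuclideanSpace ℝ (Fin d))) := by
    refine ⟨hVm.aestronglyMeasurable, ?_⟩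
    rw [eLpNorm_lt_top_iff_lintegral_rpow_enorm_lt_top
      (by simp [ENNReal.ofReal_eq_zero]; linarith) ENNReal.ofReal_ne_top,
      ENNReal.toReal_ofReal hq0.le]
    simp only [enorm_eq_nnnorm]
    rw [hLEq q]
    refine ENNReal.mul_lt_top hCtop.lt_top ?_
    -- bound the radial lintegral
    have hbound : ∀ y : ℝ, ENNReal.ofReal (y ^ (d - 1)) * (‖W y‖₊ : ℝ≥0∞) ^ q
        ≤ (Ico (1-δ) (1+δ)).indicator (fun y => ENNReal.ofReal ((1+δ) ^ (d - 1)) *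
            (‖(|y - 1| ^ α * (-Real.log |y - 1|) ^ b)⁻¹‖₊ : ℝ≥0∞) ^ q) y := by
      intro y
      by_cases hy : y ∈ Ico (1-δ) (1+δ)
      · rw [indicator_of_mem hy, hW1 y hy]
        refine mul_le_mul' (ENNReal.ofReal_le_ofReal ?_) le_rfl
        exact pow_le_pow_left₀ (by linarith [hy.1]) (by linarith [hy.2]) _
      · rw [indicator_of_notMem hy, hW0 y hy]
        simp [ENNReal.zero_rpow_of_pos hq0]
    calc ∫⁻ y in Ioi (0:ℝ), ENNReal.ofReal (y ^ (d - 1)) * (‖W y‖₊ : ℝ≥0∞) ^ q ∂volume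
        ≤ ∫⁻ y in Ioi (0:ℝ), (Ico (1-δ) (1+δ)).indicator
            (fun y => ENNReal.ofReal ((1+δ) ^ (d - 1)) *
              (‖(|y - 1| ^ α * (-Real.log |y - 1|) ^ b)⁻¹‖₊ : ℝ≥0∞) ^ q) y ∂volume :=
        lintegral_mono hbound
      _ ≤ ∫⁻ y, (Ico (1-δ) (1+δ)).indicator
            (fun y => ENNReal.ofReal ((1+δ) ^ (d - 1)) *
              (‖(|y - 1| ^ α * (-Real.log |y - 1|) ^ b)⁻¹‖₊ : ℝ≥0∞) ^ q) y ∂volume :=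
        setLIntegral_le_lintegral _ _
      _ = ∫⁻ y in Ico (1-δ) (1+δ), ENNReal.ofReal ((1+δ) ^ (d - 1)) *
            (‖(|y - 1| ^ α * (-Real.log |y - 1|) ^ b)⁻¹‖₊ : ℝ≥0∞) ^ q ∂volume :=
        lintegral_indicator measurableSet_Ico _
      _ = ENNReal.ofReal ((1+δ) ^ (d - 1)) * ∫⁻ y in Ico (1-δ) (1+δ),
            (‖(|y - 1| ^ α * (-Real.log |y - 1|) ^ b)⁻¹‖₊ : ℝ≥0∞) ^ q ∂volume :=
        lintegral_const_mul' _ _ ENNReal.ofReal_ne_top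
      _ < ⊤ := ENNReal.mul_lt_top ENNReal.ofReal_lt_top hJ
  refine ⟨fun K _ => hMem.restrict K, ?_⟩
  ------------------------------------------------------------------
  -- Part 2: V ∉ L^p_loc for p > (d-1)/2
  ------------------------------------------------------------------
  intro p hp Hall
  have hp0 : 0 < p := lt_trans hq0 hp
  have hαp : 1 < α * p := by
    have : α * q = 1 := hαq
    have hα0 : 0 < α := by rw [hα]; positivity
    nlinarith
  have hK := Hall (closedBall 0 2) (isCompact_closedBall 0 2)
  have hfinK : ∫⁻ x in closedBall (0 : EuclideanSpace ℝ (Fin d)) 2,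
      (‖V x‖₊ : ℝ≥0∞) ^ p ∂volume < ⊤ := by
    have := (eLpNorm_lt_top_iff_lintegral_rpow_enorm_lt_top
      (f := V) (μ := volume.restrict (closedBall (0 : EuclideanSpace ℝ (Fin d)) 2))
      (by simp [ENNReal.ofReal_eq_zero]; linarith) ENNReal.ofReal_ne_top).mp hK.2
    rwa [ENNReal.toReal_ofReal hp0.le] at this
  have htot : ∫⁻ x, (‖V x‖₊ : ℝ≥0∞) ^ p ∂(volume : Measure (EuclideanSpace ℝ (Fin d)))
      = ∫⁻ x in closedBall (0 : EuclideanSpace ℝ (Fin d)) 2, (‖V x‖₊ : ℝ≥0∞) ^ p ∂volume := by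
    rw [← lintegral_indicator (measurableSet_closedBall) _]
    refine lintegral_congr fun x => ?_
    by_cases hx : x ∈ closedBall (0 : EuclideanSpace ℝ (Fin d)) 2
    · rw [indicator_of_mem hx]
    · rw [indicator_of_notMem hx, hVW x, hW0]
      · simp [ENNReal.zero_rpow_of_pos hp0]
      · intro hmem
        rw [mem_closedBall_zero_iff, not_le] at hx
        have := hmem.2
        linarith
  have hLp : ∫⁻ y in Ioi (0:ℝ), ENNReal.ofReal (y ^ (d - 1)) * (‖W y‖₊ : ℝ≥0∞) ^ p ∂volume ≠ ⊤ := by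
    intro htop
    rw [← htot, hLEq p, htop, ENNReal.mul_top hC0] at hfinK
    exact lt_irrefl _ hfinK
  have hJp : ∫⁻ y in Ioo 1 (1+δ),
      (‖(|y - 1| ^ α * (-Real.log |y - 1|) ^ b)⁻¹‖₊ : ℝ≥0∞) ^ p ∂volume ≠ ⊤ := by
    intro htop
    apply hLp
    refine eq_top_iff.mpr ?_
    calc (⊤:ℝ≥0∞) = ∫⁻ y in Ioo 1 (1+δ),
          (‖(|y - 1| ^ α * (-Real.log |y - 1|) ^ b)⁻¹‖₊ : ℝ≥0∞) ^ p ∂volume := htop.symm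
      _ ≤ ∫⁻ y in Ioo 1 (1+δ),
          ENNReal.ofReal (y ^ (d - 1)) * (‖W y‖₊ : ℝ≥0∞) ^ p ∂volume := by
        refine lintegral_mono_ae ?_
        filter_upwards [ae_restrict_mem measurableSet_Ioo] with y hy
        have h1 : y ∈ Ico (1-δ) (1+δ) := ⟨by linarith [hy.1], hy.2⟩
        rw [hW1 y h1]
        have hone : (1:ℝ≥0∞) ≤ ENNReal.ofReal (y ^ (d - 1)) := by
          rw [← ENNReal.ofReal_one]
          exact ENNReal.ofReal_le_ofReal (one_le_pow₀ hy.1.le)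
        calc (‖(|y - 1| ^ α * (-Real.log |y - 1|) ^ b)⁻¹‖₊ : ℝ≥0∞) ^ p
            = 1 * (‖(|y - 1| ^ α * (-Real.log |y - 1|) ^ b)⁻¹‖₊ : ℝ≥0∞) ^ p := (one_mul _).symm
          _ ≤ ENNReal.ofReal (y ^ (d - 1)) * (‖(|y - 1| ^ α * (-Real.log |y - 1|) ^ b)⁻¹‖₊ : ℝ≥0∞) ^ p :=
            mul_le_mul' hone le_rfl
      _ ≤ ∫⁻ y in Ioi (0:ℝ),
          ENNReal.ofReal (y ^ (d - 1)) * (‖W y‖₊ : ℝ≥0∞) ^ p ∂volume :=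
        lintegral_mono_set (fun y hy => lt_trans one_pos hy.1)
  have hgm : Measurable fun y : ℝ => (|y - 1| ^ α * (-Real.log |y - 1|) ^ b)⁻¹ := by fun_prop
  have hcontr := hintOn_of_lt _ _ p hp0.le hgm (lt_top_iff_ne_top.mpr hJp)
  have hfinal := (uIntOn_iff_right hδ0 hδ1).mp hcontr
  exact core_nonint hαp hδ0 hδ1 hfinal
end
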